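/- Let m be an odd positive integer and let (a,b) ∈ F_{2^m} × F_{2^m} with (a,b) ≠ (0,0). Define the integer S_3 = Σ_{x ∈ F_{2^m}^*} Σ_{y ∈ F_{2^m}} (−1)^{Tr(yx² + x + y) + Tr(axy + bx)}. Then: S_3 = −2^m if a = 0, b ≠ 0 and Tr(b) = 0; S_3 = 2^m if a = 0, b ≠ 0 and Tr(b) = 1; S_3 = 0 if a ∉ Υ1 ∪ {0}, or if a ∈ Υ1 and Tr((b+1)a) = 1; and S_3 = 2^{m+1} or S_3 = −2^{m+1} if a ∈ Υ1 and Tr((b+1)a) = 0. -/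

import Mathlib

attribute [local instance] Classical.propDecidable

noncomputable instance (m : ℕ) : Fintype (GaloisField 2 m) := Fintype.ofFinite _

/-- The absolute trace map from `F_{2^m}` to `F_2`. -/
noncomputable def Tr (m : ℕ) (x : GaloisField 2 m) : ZMod 2 :=
  Algebra.trace (ZMod 2) (GaloisField 2 m) x

/-- For `t ∈ F_2`, `sgn t` is the integer `(-1)^t`. -/
def sgn : ZMod 2 → ℤ := fun t => if t = 0 then 1 else -1

/-- The set `Υ₁ = {r + r⁻¹ : r ∈ F_{2^m}^*, r ≠ 1}`. -/
def Ups1 (m : ℕ) : Set (GaloisField 2 m) :=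
  {u | ∃ r : GaloisField 2 m, r ≠ 0 ∧ r ≠ 1 ∧ u = r + r⁻¹}

lemma sgn_add (s t : ZMod 2) : sgn (s + t) = sgn s * sgn t := by revert s t; decide

lemma sgn_add_one (t : ZMod 2) : sgn (t + 1) = -sgn t := by revert t; decide

lemma Tr_add (m : ℕ) (x y : GaloisField 2 m) : Tr m (x + y) = Tr m x + Tr m y :=
  map_add (Algebra.trace (ZMod 2) (GaloisField 2 m)) x y

lemma Tr_zero (m : ℕ) : Tr m 0 = 0 :=
  map_zero (Algebra.trace (ZMod 2) (GaloisField 2 m))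

lemma Tr_one (m : ℕ) (hodd : Odd m) : Tr m 1 = 1 := by
  have hm : m ≠ 0 := by rintro rfl; simpa using hodd
  have h1 : (1 : GaloisField 2 m) = algebraMap (ZMod 2) (GaloisField 2 m) 1 := by
    simp
  rw [Tr, h1, Algebra.trace_algebraMap, GaloisField.finrank 2 hm]
  have h2 : m % 2 = 1 := Nat.odd_iff.mp hodd
  rw [nsmul_eq_mul, mul_one, ← ZMod.natCast_mod m 2, h2, Nat.cast_one]

lemma card_GF (m : ℕ) (hm : 0 < m) : Fintype.card (GaloisField 2 m) = 2 ^ m := by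
  rw [← Nat.card_eq_fintype_card]
  exact GaloisField.card 2 m hm.ne'

lemma two_eq_zero (m : ℕ) : (2 : GaloisField 2 m) = 0 := by
  have : CharP (GaloisField 2 m) 2 := inferInstance
  exact CharTwo.two_eq_zero

lemma sum_sgn_mul (m : ℕ) (hm : 0 < m) (hodd : Odd m) (c : GaloisField 2 m) :
    ∑ y : GaloisField 2 m, sgn (Tr m (y * c)) = if c = 0 then (2 ^ m : ℤ) else 0 := by
  split_ifs with hc
  · subst hc
    simp only [mul_zero, Tr_zero]
    simp [sgn, card_GF m hm]
  · set S := ∑ y : GaloisField 2 m, sgn (Tr m (y * c)) with hS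
    have key : S = -S := by
      have := Fintype.sum_equiv (Equiv.addRight c⁻¹)
        (fun y : GaloisField 2 m => -sgn (Tr m (y * c)))
        (fun y : GaloisField 2 m => sgn (Tr m (y * c)))
        (fun y => by
          simp only [Equiv.coe_addRight]
          rw [add_mul, Tr_add, inv_mul_cancel₀ hc, Tr_one m hodd, sgn_add_one])
      calc S = ∑ y : GaloisField 2 m, -sgn (Tr m (y * c)) := by rw [hS]; exact this.symm
      _ = -S := by rw [hS]; exact Finset.sum_neg_distrib _
    linarith

theorem stmt6 (m : ℕ) (hm : 0 < m) (hodd : Odd m) (a b : GaloisField 2 m)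
    (hab : (a, b) ≠ (0, 0)) :
    let S3 : ℤ := ∑ x ∈ Finset.univ.filter (fun x : GaloisField 2 m => x ≠ 0),
      ∑ y : GaloisField 2 m, sgn (Tr m (y * x ^ 2 + x + y) + Tr m (a * x * y + b * x))
    (a = 0 → b ≠ 0 → Tr m b = 0 → S3 = -(2 ^ m : ℤ)) ∧
    (a = 0 → b ≠ 0 → Tr m b = 1 → S3 = 2 ^ m) ∧
    (a ∉ Ups1 m → a ≠ 0 → S3 = 0) ∧
    (a ∈ Ups1 m → Tr m ((b + 1) * a) = 1 → S3 = 0) ∧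
    (a ∈ Ups1 m → Tr m ((b + 1) * a) = 0 →
      S3 = 2 ^ (m + 1) ∨ S3 = -(2 ^ (m + 1) : ℤ)) := by
  intro S3
  have char2 : (2 : GaloisField 2 m) = 0 := two_eq_zero m
  have step1 : ∀ x : GaloisField 2 m,
      (∑ y : GaloisField 2 m, sgn (Tr m (y * x ^ 2 + x + y) + Tr m (a * x * y + b * x)))
      = sgn (Tr m ((b + 1) * x)) * (if x ^ 2 + a * x + 1 = 0 then (2 ^ m : ℤ) else 0) := by
    intro x
    have harg : ∀ y : GaloisField 2 m,
        Tr m (y * x ^ 2 + x + y) + Tr m (a * x * y + b * x)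
        = Tr m (y * (x ^ 2 + a * x + 1)) + Tr m ((b + 1) * x) := by
      intro y
      rw [← Tr_add, ← Tr_add]
      congr 1
      ring
    calc (∑ y : GaloisField 2 m, sgn (Tr m (y * x ^ 2 + x + y) + Tr m (a * x * y + b * x)))
        = ∑ y : GaloisField 2 m,
            sgn (Tr m (y * (x ^ 2 + a * x + 1))) * sgn (Tr m ((b + 1) * x)) := by
          refine Finset.sum_congr rfl fun y _ => ?_
          rw [harg y, sgn_add]
      _ = (∑ y : GaloisField 2 m, sgn (Tr m (y * (x ^ 2 + a * x + 1))))
            * sgn (Tr m ((b + 1) * x)) := by rw [← Finset.sum_mul]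
      _ = sgn (Tr m ((b + 1) * x)) * (if x ^ 2 + a * x + 1 = 0 then (2 ^ m : ℤ) else 0) := by
          rw [sum_sgn_mul m hm hodd, mul_comm]
  have hS3 : S3 = (∑ x ∈ Finset.univ.filter
      (fun x : GaloisField 2 m => x ^ 2 + a * x + 1 = 0), sgn (Tr m ((b + 1) * x))) * 2 ^ m := by
    have h1 : S3 = ∑ x ∈ Finset.univ.filter (fun x : GaloisField 2 m => x ≠ 0),
        (if x ^ 2 + a * x + 1 = 0 then sgn (Tr m ((b + 1) * x)) * 2 ^ m else 0) := by
      refine Finset.sum_congr rfl fun x _ => ?_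
      rw [step1 x, mul_ite, mul_zero]
    have hset : (Finset.univ.filter (fun x : GaloisField 2 m => x ≠ 0)).filter
        (fun x : GaloisField 2 m => x ^ 2 + a * x + 1 = 0)
        = Finset.univ.filter (fun x : GaloisField 2 m => x ^ 2 + a * x + 1 = 0) := by
      ext x
      simp only [Finset.mem_filter, Finset.mem_univ, true_and]
      constructor
      · rintro ⟨-, h⟩; exact h
      · intro h
        refine ⟨?_, h⟩
        rintro rfl
        simp at h
    rw [h1, ← Finset.sum_filter, hset, ← Finset.sum_mul]
  refine ⟨?_, ?_, ?_, ?_, ?_⟩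
  · -- a = 0, Tr b = 0
    intro ha hb htr
    subst ha
    have hroots : Finset.univ.filter (fun x : GaloisField 2 m => x ^ 2 + 0 * x + 1 = 0)
        = {1} := by
      ext x
      simp only [Finset.mem_filter, Finset.mem_univ, true_and, Finset.mem_singleton]
      constructor
      · intro h
        have e : (x + 1) ^ 2 = 0 := by linear_combination h + x * char2
        have hx1 : x + 1 = 0 := by
          exact pow_eq_zero_iff (two_ne_zero) |>.mp e
        linear_combination hx1 - char2
      · rintro rfl
        linear_combination char2
    rw [hS3, hroots, Finset.sum_singleton, mul_one, Tr_add, htr, Tr_one m hodd, zero_add]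
    norm_num [sgn]
  · -- a = 0, Tr b = 1
    intro ha hb htr
    subst ha
    have hroots : Finset.univ.filter (fun x : GaloisField 2 m => x ^ 2 + 0 * x + 1 = 0)
        = {1} := by
      ext x
      simp only [Finset.mem_filter, Finset.mem_univ, true_and, Finset.mem_singleton]
      constructor
      · intro h
        have e : (x + 1) ^ 2 = 0 := by linear_combination h + x * char2
        have hx1 : x + 1 = 0 := by
          exact pow_eq_zero_iff (two_ne_zero) |>.mp e
        linear_combination hx1 - char2
      · rintro rfl
        linear_combination char2
    rw [hS3, hroots, Finset.sum_singleton, mul_one, Tr_add, htr, Tr_one m hodd,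
      show (1 + 1 : ZMod 2) = 0 by decide]
    norm_num [sgn]
  · -- a ∉ Ups1, a ≠ 0
    intro hUps ha0
    have hroots : Finset.univ.filter (fun x : GaloisField 2 m => x ^ 2 + a * x + 1 = 0)
        = ∅ := by
      ext x
      simp only [Finset.mem_filter, Finset.mem_univ, true_and, Finset.notMem_empty,
        iff_false]
      intro hx
      apply hUps
      have hx0 : x ≠ 0 := by
        rintro rfl
        simp at hx
      have hx1 : x ≠ 1 := by
        rintro rfl
        exact ha0 (by linear_combination hx - char2)
      have hxinv : x * x⁻¹ = 1 := mul_inv_cancel₀ hx0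
      refine ⟨x, hx0, hx1, ?_⟩
      have hax : a * x = x ^ 2 + 1 := by linear_combination -hx + (a * x) * char2
      calc a = a * (x * x⁻¹) := by rw [hxinv, mul_one]
        _ = (a * x) * x⁻¹ := by ring
        _ = (x ^ 2 + 1) * x⁻¹ := by rw [hax]
        _ = x * (x * x⁻¹) + 1 * x⁻¹ := by ring
        _ = x + x⁻¹ := by rw [hxinv, mul_one, one_mul]
    rw [hS3, hroots, Finset.sum_empty, zero_mul]
  · -- a ∈ Ups1, Tr((b+1)a) = 1
    intro hUps htr
    obtain ⟨r, hr0, hr1, hra⟩ := hUps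
    have hrinv : r * r⁻¹ = 1 := mul_inv_cancel₀ hr0
    have hne : r ≠ r⁻¹ := by
      intro h
      apply hr1
      have hsq : r ^ 2 = 1 := by
        calc r ^ 2 = r * r := sq r
          _ = r * r⁻¹ := by rw [← h]
          _ = 1 := hrinv
      have e : (r + 1) ^ 2 = 0 := by linear_combination hsq + (r + 1) * char2
      have hx1 : r + 1 = 0 := pow_eq_zero_iff (two_ne_zero) |>.mp e
      linear_combination hx1 - char2
    have hroots : Finset.univ.filter (fun x : GaloisField 2 m => x ^ 2 + a * x + 1 = 0)
        = {r, r⁻¹} := by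
      ext x
      simp only [Finset.mem_filter, Finset.mem_univ, true_and, Finset.mem_insert,
        Finset.mem_singleton]
      constructor
      · intro hx
        have key : (x + r) * (x + r⁻¹) = 0 := by linear_combination hx - x * hra + hrinv
        rcases mul_eq_zero.mp key with h | h
        · left; linear_combination h - r * char2
        · right; linear_combination h - r⁻¹ * char2
      · intro h
        rcases h with h | h <;> rw [h]
        · linear_combination r * hra + hrinv + (r ^ 2 + 1) * char2
        · linear_combination r⁻¹ * hra + hrinv + ((r⁻¹) ^ 2 + 1) * char2
    have hsum : Tr m ((b + 1) * r) + Tr m ((b + 1) * r⁻¹) = Tr m ((b + 1) * a) := by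
      rw [← Tr_add]
      congr 1
      rw [hra]; ring
    have key : ∀ s t : ZMod 2, s + t = 1 → sgn s + sgn t = 0 := by decide
    rw [hS3, hroots, Finset.sum_pair hne, key _ _ (hsum.trans htr), zero_mul]
  · -- a ∈ Ups1, Tr((b+1)a) = 0
    intro hUps htr
    obtain ⟨r, hr0, hr1, hra⟩ := hUps
    have hrinv : r * r⁻¹ = 1 := mul_inv_cancel₀ hr0
    have hne : r ≠ r⁻¹ := by
      intro h
      apply hr1
      have hsq : r ^ 2 = 1 := by
        calc r ^ 2 = r * r := sq r
          _ = r * r⁻¹ := by rw [← h]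
          _ = 1 := hrinv
      have e : (r + 1) ^ 2 = 0 := by linear_combination hsq + (r + 1) * char2
      have hx1 : r + 1 = 0 := pow_eq_zero_iff (two_ne_zero) |>.mp e
      linear_combination hx1 - char2
    have hroots : Finset.univ.filter (fun x : GaloisField 2 m => x ^ 2 + a * x + 1 = 0)
        = {r, r⁻¹} := by
      ext x
      simp only [Finset.mem_filter, Finset.mem_univ, true_and, Finset.mem_insert,
        Finset.mem_singleton]
      constructor
      · intro hx
        have key : (x + r) * (x + r⁻¹) = 0 := by linear_combination hx - x * hra + hrinv
        rcases mul_eq_zero.mp key with h | h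
        · left; linear_combination h - r * char2
        · right; linear_combination h - r⁻¹ * char2
      · intro h
        rcases h with h | h <;> rw [h]
        · linear_combination r * hra + hrinv + (r ^ 2 + 1) * char2
        · linear_combination r⁻¹ * hra + hrinv + ((r⁻¹) ^ 2 + 1) * char2
    have hsum : Tr m ((b + 1) * r) + Tr m ((b + 1) * r⁻¹) = Tr m ((b + 1) * a) := by
      rw [← Tr_add]
      congr 1
      rw [hra]; ring
    have key : ∀ s t : ZMod 2, s + t = 0 → sgn s + sgn t = 2 ∨ sgn s + sgn t = -2 := by
      decide
    rw [hS3, hroots, Finset.sum_pair hne]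
    rcases key _ _ (hsum.trans htr) with h | h
    · left; rw [h, pow_succ]; ring
    · right; rw [h, pow_succ]; ring
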